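/- Let n ≥ 1 and let E : Fin n → Fin n → Prop be an irreflexive relation that is strongly connected (Relation.ReflTransGen E u v holds for all u, v). Let A : Matrix (Fin n) (Fin n) ℂ satisfy A i j ≠ 0 whenever E j i. If D : Matrix (Fin n) (Fin n) ℂ is diagonal (D i j = 0 for all i ≠ j) and D * A = A * D, then there exists c : ℂ with D = c • (1 : Matrix (Fin n) (Fin n) ℂ). -/
import Mathlib

open Matrix

/-- For a strongly connected directed simple graph on `Fin n`
and `A` with nonzero entries on all edge positions, any diagonal matrix
commuting with `A` is a scalar multiple of the identity. -/
theorem diagonal_commuting_is_scalar (n : ℕ) (hn : 1 ≤ n)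
    (E : Fin n → Fin n → Prop) (hirr : ∀ v, ¬ E v v)
    (hsc : ∀ u v : Fin n, Relation.ReflTransGen E u v)
    (A : Matrix (Fin n) (Fin n) ℂ) (hA : ∀ i j, E j i → A i j ≠ 0)
    (D : Matrix (Fin n) (Fin n) ℂ) (hD : ∀ i j, i ≠ j → D i j = 0)
    (hcomm : D * A = A * D) :
    ∃ c : ℂ, D = c • (1 : Matrix (Fin n) (Fin n) ℂ) := by
  have key : ∀ i j, E j i → D i i = D j j := by
    intro i j hE
    have h1 : (D * A) i j = D i i * A i j := by
      rw [Matrix.mul_apply]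
      rw [Finset.sum_eq_single i]
      · intro k _ hk
        rw [hD i k (Ne.symm hk), zero_mul]
      · simp
    have h2 : (A * D) i j = A i j * D j j := by
      rw [Matrix.mul_apply]
      rw [Finset.sum_eq_single j]
      · intro k _ hk
        rw [hD k j hk, mul_zero]
      · simp
    have := congrFun (congrFun hcomm i) j
    rw [h1, h2] at this
    have hAij := hA i j hE
    rw [mul_comm (D i i)] at this
    exact mul_left_cancel₀ hAij this
  have diag : ∀ u v : Fin n, D u u = D v v := by
    intro u v
    induction hsc u v with
    | refl => rfl
    | tail _ hstep ih => rw [ih, key _ _ hstep]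
  have h0 : (0 : ℕ) < n := hn
  refine ⟨D ⟨0, h0⟩ ⟨0, h0⟩, ?_⟩
  ext i j
  by_cases hij : i = j
  · subst hij
    simp [Matrix.one_apply, diag i ⟨0, h0⟩]
  · simp [Matrix.one_apply, hij, hD i j hij]
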